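/- Let p be a prime, a ≥ 1 an integer, and let w be a complex number with |w| = 1 or w = 0 (more generally |w| ≤ 1). Then (1/p^{a-1})·|(1 - 1/p)·(p^a - w^a)/(p - w) + w^{a-1}/p| ≤ 1, where for w with |w| ≤ 1 and w ≠ p we interpret (p^a - w^a)/(p - w) = ∑_{j=0}^{a-1} p^j w^{a-1-j}. -/

import Mathlib

open Finset

theorem prime_power_case (p : ℕ) (hp : p.Prime) (a : ℕ) (ha : 1 ≤ a)
    (w : ℂ) (hw : ‖w‖ ≤ 1) :
    (1 / (p : ℝ) ^ (a - 1))
      * ‖(1 - 1 / (p : ℂ)) * (∑ j ∈ Finset.range a, (p : ℂ) ^ j * w ^ (a - 1 - j))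
          + w ^ (a - 1) / p‖ ≤ 1 := by
  obtain ⟨b, rfl⟩ : ∃ b, a = b + 1 := ⟨a - 1, (Nat.succ_pred_eq_of_pos ha).symm⟩
  have hp2 : 2 ≤ p := hp.two_le
  have hp0 : (0:ℝ) < p := by exact_mod_cast hp.pos
  have hp1 : (1:ℝ) < p := by exact_mod_cast hp.one_lt
  have hwn : 0 ≤ ‖w‖ := norm_nonneg w
  -- norm of (1 - 1/p)
  have h1 : ‖(1 - 1 / (p : ℂ))‖ = 1 - 1 / (p : ℝ) := by
    rw [show (1 - 1 / (p : ℂ)) = ((1 - 1 / (p : ℝ) : ℝ) : ℂ) by push_cast; ring,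
      Complex.norm_real, Real.norm_eq_abs, abs_of_nonneg]
    have : 1 / (p:ℝ) ≤ 1 := by
      rw [div_le_one hp0]; linarith
    linarith
  have hsum : ‖∑ j ∈ Finset.range (b+1), (p : ℂ) ^ j * w ^ (b + 1 - 1 - j)‖
      ≤ ∑ j ∈ Finset.range (b+1), (p : ℝ) ^ j := by
    refine (norm_sum_le _ _).trans (Finset.sum_le_sum fun j hj => ?_)
    rw [norm_mul, norm_pow, norm_pow, Complex.norm_natCast]
    calc (p:ℝ)^j * ‖w‖^(b+1-1-j) ≤ (p:ℝ)^j * 1 := by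
          apply mul_le_mul_of_nonneg_left _ (by positivity)
          exact pow_le_one₀ hwn hw
      _ = (p:ℝ)^j := mul_one _
  have hlast : ‖w ^ (b + 1 - 1) / (p:ℂ)‖ ≤ 1 / (p:ℝ) := by
    rw [norm_div, norm_pow, Complex.norm_natCast]
    gcongr
    exact pow_le_one₀ hwn hw
  have hgeom : ∑ j ∈ Finset.range (b+1), (p : ℝ) ^ j = ((p:ℝ)^(b+1) - 1) / ((p:ℝ) - 1) :=
    geom_sum_eq (by linarith) _
  have key : ‖(1 - 1 / (p : ℂ)) * (∑ j ∈ Finset.range (b+1), (p : ℂ) ^ j * w ^ (b+1 - 1 - j))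
          + w ^ (b+1 - 1) / p‖ ≤ (p:ℝ) ^ b := by
    calc _ ≤ ‖(1 - 1 / (p : ℂ))‖ * ‖∑ j ∈ Finset.range (b+1), (p : ℂ) ^ j * w ^ (b+1-1-j)‖
            + ‖w ^ (b+1-1) / (p:ℂ)‖ := by
          exact (norm_add_le _ _).trans (by rw [norm_mul])
      _ ≤ (1 - 1/(p:ℝ)) * (((p:ℝ)^(b+1) - 1) / ((p:ℝ) - 1)) + 1/(p:ℝ) := by
          rw [h1, ← hgeom]
          have h1nn : 0 ≤ 1 - 1/(p:ℝ) := by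
            have : 1 / (p:ℝ) ≤ 1 := by rw [div_le_one hp0]; linarith
            linarith
          exact add_le_add (mul_le_mul_of_nonneg_left hsum h1nn) hlast
      _ = (p:ℝ) ^ b := by
          have h0 : (p:ℝ) ≠ 0 := by linarith
          have h1' : (p:ℝ) - 1 ≠ 0 := by linarith
          rw [pow_succ]
          field_simp
          ring
  rw [show b + 1 - 1 = b from rfl] at key ⊢
  rw [div_mul_eq_mul_div, div_le_one (by positivity), one_mul]
  exact key
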